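/- Let k ≥ 2 be an integer and let a be an integer with 1 ≤ a ≤ k−2 such that a + k − 1 is odd, and set τ = ⌊(k − a − 1)/2⌋. Then the Fourier coefficient of the presidential type predicate P at the singleton {1} satisfies P̂_{{1}} = 1 − 2^{−(k−2)} · Σ_{l=0}^{τ} C(k−1, l). -/

import Mathlib

open Finset

/-- Binomial tail identity. -/
lemma bin_aux (n t : ℕ) (h : 2 * t + 1 ≤ n) :
    (∑ m ∈ Finset.range (n + 1), if t < m ∧ m < n - t then n.choose m else 0)
      + 2 * ∑ l ∈ Finset.range (t + 1), n.choose l = 2 ^ n := by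
  have h1 : (∑ m ∈ Finset.range (n + 1), if t < m ∧ m < n - t then n.choose m else 0)
      = ∑ m ∈ Finset.Ico (t + 1) (n - t), n.choose m := by
    rw [← Finset.sum_filter]
    apply Finset.sum_congr _ (fun _ _ => rfl)
    ext m
    simp only [Finset.mem_filter, Finset.mem_range, Finset.mem_Ico]
    omega
  have h2 : (∑ m ∈ Finset.Ico (n - t) (n + 1), n.choose m)
      = ∑ l ∈ Finset.range (t + 1), n.choose l := by
    have h2a := Finset.sum_Ico_reflect (f := n.choose) (k := 0) (m := t + 1) (n := n) (by omega)
    rw [show n + 1 - (t + 1) = n - t by omega, Nat.sub_zero] at h2a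
    rw [← h2a, ← Finset.range_eq_Ico]
    exact Finset.sum_congr rfl fun j hj => by
      rw [Nat.choose_symm (by simp at hj; omega)]
  have h3 := Finset.sum_Ico_consecutive (f := n.choose)
      (m := 0) (n := t + 1) (k := n - t) (by omega) (by omega)
  have h4 := Finset.sum_Ico_consecutive (f := n.choose)
      (m := 0) (n := n - t) (k := n + 1) (by omega) (by omega)
  have h5 := Nat.sum_range_choose n
  simp only [← Finset.range_eq_Ico] at h3 h4
  rw [h1]
  omega

/-- Count functions to `Bool` by the number of `true`s. -/
lemma count_sum {α : Type*} [Fintype α] [DecidableEq α] (F : ℤ → ℝ) :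
    ∑ y : α → Bool, F (∑ j, if y j then (1 : ℤ) else -1)
      = ∑ m ∈ Finset.range (Fintype.card α + 1),
          (Nat.choose (Fintype.card α) m : ℝ) * F (2 * m - Fintype.card α) := by
  classical
  have hS : ∀ y : α → Bool, (∑ j, if y j then (1 : ℤ) else -1)
      = 2 * ((Finset.univ.filter (fun j => y j = true)).card : ℤ) - Fintype.card α := by
    intro y
    have h1 : ∀ j ∈ Finset.univ, (if y j then (1 : ℤ) else -1)
        = 2 * (if y j = true then (1 : ℤ) else 0) - 1 := by
      intro j _; by_cases h : y j <;> simp [h]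
    rw [Finset.sum_congr rfl h1, Finset.sum_sub_distrib, ← Finset.mul_sum]
    simp [Finset.card_univ]
  have key : ∑ y : α → Bool, F (∑ j, if y j then (1 : ℤ) else -1)
      = ∑ s : Finset α, F (2 * (s.card : ℤ) - Fintype.card α) := by
    refine (Fintype.sum_bijective (fun s : Finset α => fun j => decide (j ∈ s))
      ⟨fun s t hst => ?_, fun y => ⟨Finset.univ.filter (fun j => y j = true), ?_⟩⟩
      _ _ fun s => ?_).symm
    · ext j
      have := congrFun hst j
      simpa using this
    · funext j; by_cases h : y j <;> simp [h]
    · rw [hS]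
      congr 1
      simp [Finset.filter_univ_mem]
  rw [key, show (Finset.univ : Finset (Finset α))
        = (Finset.univ : Finset α).powerset from (Finset.powerset_univ).symm,
    Finset.sum_powerset_apply_card (f := fun m => F (2 * (m : ℤ) - Fintype.card α))]
  simp [Finset.card_univ, nsmul_eq_mul]

lemma pair_sum (a S : ℤ) (ha : 1 ≤ a) :
    ((if 0 < a * 1 + S then (1 : ℝ) else -1) * 1
      + (if 0 < a * (-1) + S then (1 : ℝ) else -1) * (-1))
      = if -a < S ∧ S ≤ a then 2 else 0 := by
  split_ifs <;> norm_num <;> omega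


lemma pair2 (a : ℤ) (S : ℤ) (ha : 1 ≤ a) :
    (if 0 < a * (if (true : Bool) then (1:ℤ) else -1) + S then (1:ℝ) else -1) *
        (if (true : Bool) then (1:ℝ) else -1)
      + (if 0 < a * (if (false : Bool) then (1:ℤ) else -1) + S then (1:ℝ) else -1) *
        (if (false : Bool) then (1:ℝ) else -1)
      = if -a < S ∧ S ≤ a then 2 else 0 := by
  simp only [if_true, if_false, Bool.false_eq_true, ite_true, ite_false]
  split_ifs <;> norm_num <;> omega

lemma main_aux (k' : ℕ) (z : Fin (k' + 2)) (a : ℤ) (ha1 : 1 ≤ a)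
    (ha2 : a ≤ ((k' + 2 : ℕ) : ℤ) - 2) (hodd : Odd (a + ((k' + 2 : ℕ) : ℤ) - 1)) :
    ((2 : ℝ) ^ (k' + 2))⁻¹ *
        ∑ x : Fin (k' + 2) → Bool,
          (if 0 < a * (if x z then (1 : ℤ) else -1) +
                ∑ i ∈ Finset.univ.filter (fun i : Fin (k' + 2) => i ≠ z),
                  (if x i then (1 : ℤ) else -1)
            then (1 : ℝ) else -1) *
          (if x z then (1 : ℝ) else -1) =
      1 - ((2 : ℝ) ^ k')⁻¹ *
        ∑ l ∈ Finset.range ((((((k' + 2 : ℕ) : ℤ)) - a - 1).toNat) / 2 + 1),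
          ((k' + 1).choose l : ℝ) := by
  classical
  set F : ℤ → ℝ := fun S => if -a < S ∧ S ≤ a then 2 else 0 with hF
  set t : ℕ := (((((k' + 2 : ℕ) : ℤ)) - a - 1).toNat) / 2 with htdef
  obtain ⟨c, hc⟩ := hodd
  have hD : ((((((k' + 2 : ℕ) : ℤ)) - a - 1).toNat : ℤ)) = (k' : ℤ) + 1 - a := by
    rw [Int.toNat_of_nonneg (by push_cast; omega)]; push_cast; ring
  have ht : 2 * (t : ℤ) + 1 = (k' : ℤ) + 1 - a := by omega
  have hstep1 :
      (∑ x : Fin (k' + 2) → Bool,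
          (if 0 < a * (if x z then (1 : ℤ) else -1) +
                ∑ i ∈ Finset.univ.filter (fun i : Fin (k' + 2) => i ≠ z),
                  (if x i then (1 : ℤ) else -1)
            then (1 : ℝ) else -1) *
          (if x z then (1 : ℝ) else -1))
      = ∑ y : {j : Fin (k' + 2) // j ≠ z} → Bool,
          F (∑ j, if y j then (1 : ℤ) else -1) := by
    rw [← Equiv.sum_comp (Equiv.funSplitAt z Bool).symm, Fintype.sum_prod_type_right]
    refine Finset.sum_congr rfl fun y _ => ?_
    rw [Fintype.sum_bool]
    have hval : ∀ b : Bool,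
        (∑ i ∈ Finset.univ.filter (fun i : Fin (k' + 2) => i ≠ z),
          (if (Equiv.funSplitAt z Bool).symm (b, y) i then (1 : ℤ) else -1))
        = ∑ j : {i : Fin (k' + 2) // i ≠ z}, (if y j then (1 : ℤ) else -1) := by
      intro b
      rw [Finset.sum_subtype (p := fun i : Fin (k' + 2) => i ≠ z) _ (by simp)
        (fun i => if (Equiv.funSplitAt z Bool).symm (b, y) i then (1 : ℤ) else -1)]
      refine Finset.sum_congr rfl fun j _ => ?_
      congr 1
      simp [j.2]
    rw [show (Equiv.funSplitAt z Bool).symm (true, y) z = true by simp,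
      show (Equiv.funSplitAt z Bool).symm (false, y) z = false by simp,
      hval true, hval false]
    simp only [hF]
    exact pair2 a _ ha1
  have hcard : Fintype.card {j : Fin (k' + 2) // j ≠ z} = k' + 1 := by
    rw [Fintype.card_subtype_compl, Fintype.card_fin]
    simp
  have hstep2 := count_sum (α := {j : Fin (k' + 2) // j ≠ z}) F
  rw [hcard] at hstep2
  have hstep3 : ∀ m ∈ Finset.range (k' + 1 + 1),
      ((k' + 1).choose m : ℝ) * F (2 * m - ((k' + 1 : ℕ) : ℤ))
        = 2 * (if t < m ∧ m < (k' + 1) - t then ((k' + 1).choose m : ℝ) else 0) := by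
    intro m hm
    simp only [Finset.mem_range] at hm
    have hiff : (-a < 2 * (m : ℤ) - ((k' + 1 : ℕ) : ℤ) ∧
        2 * (m : ℤ) - ((k' + 1 : ℕ) : ℤ) ≤ a) ↔ (t < m ∧ m < (k' + 1) - t) := by
      omega
    simp only [hF]
    rw [if_congr hiff rfl rfl]
    split_ifs <;> ring
  have hb := bin_aux (k' + 1) t (by omega)
  have hbR : (∑ m ∈ Finset.range (k' + 1 + 1),
        if t < m ∧ m < (k' + 1) - t then ((k' + 1).choose m : ℝ) else 0)
      = 2 ^ (k' + 1) - 2 * ∑ l ∈ Finset.range (t + 1), ((k' + 1).choose l : ℝ) := by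
    have hcast := congrArg (Nat.cast : ℕ → ℝ) hb
    push_cast at hcast
    linarith
  rw [hstep1, hstep2, Finset.sum_congr rfl hstep3, ← Finset.mul_sum, hbR]
  have h2 : (2 : ℝ) ≠ 0 := by norm_num
  rw [show k' + 2 = (k' + 1) + 1 by ring, pow_succ, pow_succ]
  field_simp

theorem stmt_0 (k : ℕ) (hk : 2 ≤ k) (a : ℤ) (ha1 : 1 ≤ a) (ha2 : a ≤ (k : ℤ) - 2)
    (hodd : Odd (a + (k : ℤ) - 1)) :
    ((2 : ℝ) ^ k)⁻¹ *
        ∑ x : Fin k → Bool,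
          (if 0 < a * (if x ⟨0, by omega⟩ then (1 : ℤ) else -1) +
                ∑ i ∈ Finset.univ.filter (fun i : Fin k => i ≠ ⟨0, by omega⟩),
                  (if x i then (1 : ℤ) else -1)
            then (1 : ℝ) else -1) *
          (if x ⟨0, by omega⟩ then (1 : ℝ) else -1) =
      1 - ((2 : ℝ) ^ (k - 2))⁻¹ *
        ∑ l ∈ Finset.range ((((k : ℤ) - a - 1).toNat) / 2 + 1), ((k - 1).choose l : ℝ) := by
  obtain ⟨k', rfl⟩ : ∃ k', k = k' + 2 := ⟨k - 2, by omega⟩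
  exact main_aux k' ⟨0, by omega⟩ a ha1 ha2 hodd
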